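/- Let R be a commutative ring and x₁, x₂ ∈ R. Let E = R[X]/((X − x₁)(X − x₂)) and let α be the image of X in E. Then E is a free R-module with basis (1, α), the traces are Tr_{E/R}(α) = x₁ + x₂ and Tr_{E/R}(α²) = x₁² + x₂², and the discriminant of the basis (1, α), namely the determinant of the 2×2 matrix with entries Tr_{E/R}(bᵢ·bⱼ) for b₁ = 1, b₂ = α, equals (x₁ − x₂)². -/

import Mathlib

open Polynomial

/-- The key local computation in the proof of Theorem 3.12 of the paper: for
`E = R[X]/((X - x₁)(X - x₂))` with `α` the image of `X`, `E` is free with basis `(1, α)`,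
`Tr(α) = x₁ + x₂`, `Tr(α²) = x₁² + x₂²`, and the discriminant of the basis `(1, α)` is
`(x₁ - x₂)²`. -/
theorem stmt_11 {R : Type*} [CommRing R] (x₁ x₂ : R) :
    ∃ b : Module.Basis (Fin 2) R (AdjoinRoot ((X - C x₁) * (X - C x₂))),
      b 0 = 1 ∧
      b 1 = AdjoinRoot.root ((X - C x₁) * (X - C x₂)) ∧
      Algebra.trace R (AdjoinRoot ((X - C x₁) * (X - C x₂)))
        (AdjoinRoot.root ((X - C x₁) * (X - C x₂))) = x₁ + x₂ ∧
      Algebra.trace R (AdjoinRoot ((X - C x₁) * (X - C x₂)))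
        (AdjoinRoot.root ((X - C x₁) * (X - C x₂)) ^ 2) = x₁ ^ 2 + x₂ ^ 2 ∧
      Algebra.discr R ![1, AdjoinRoot.root ((X - C x₁) * (X - C x₂))] = (x₁ - x₂) ^ 2 := by
  classical
  rcases subsingleton_or_nontrivial R with hR | hR
  · haveI := Module.subsingleton R (AdjoinRoot ((X - C x₁) * (X - C x₂)))
    haveI : Subsingleton ((Fin 2) →₀ R) :=
      ⟨fun a b => Finsupp.ext fun i => Subsingleton.elim _ _⟩
    refine ⟨Module.Basis.ofRepr
      { toFun := fun _ => 0
        map_add' := by simp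
        map_smul' := by simp
        invFun := fun _ => 0
        left_inv := fun x => Subsingleton.elim _ _
        right_inv := fun x => Subsingleton.elim _ _ }, Subsingleton.elim _ _,
      Subsingleton.elim _ _, Subsingleton.elim _ _, Subsingleton.elim _ _,
      Subsingleton.elim _ _⟩
  set f : R[X] := (X - C x₁) * (X - C x₂) with hf
  have hm : f.Monic := (monic_X_sub_C x₁).mul (monic_X_sub_C x₂)
  have hdeg : f.natDegree = 2 := by
    rw [hf, (monic_X_sub_C x₁).natDegree_mul (monic_X_sub_C x₂),
      natDegree_X_sub_C, natDegree_X_sub_C]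
  set E := AdjoinRoot f
  set α : E := AdjoinRoot.root f with hα
  let pb := AdjoinRoot.powerBasis' hm
  let b : Module.Basis (Fin 2) R E := pb.basis.reindex (finCongr hdeg)
  have hb : ∀ i : Fin 2, b i = α ^ (i : ℕ) := by
    intro i
    rw [show b i = pb.basis ((finCongr hdeg).symm i) from Module.Basis.reindex_apply _ _ i]
    exact pb.basis_eq_pow _
  have hb0 : b 0 = 1 := by rw [hb]; simp
  have hb1 : b 1 = α := by rw [hb]; simp
  -- key relation
  have key : α ^ 2 = (x₁ + x₂) • α - (x₁ * x₂) • (1 : E) := by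
    have h0 : (AdjoinRoot.mk f) (X ^ 2 - C (x₁ + x₂) * X + C (x₁ * x₂)) = 0 := by
      rw [show X ^ 2 - C (x₁ + x₂) * X + C (x₁ * x₂) = (X - C x₁) * (X - C x₂) by
        simp only [C_add, C_mul]; ring, ← hf, AdjoinRoot.mk_self]
    simp only [map_add, map_sub, map_mul, map_pow, AdjoinRoot.mk_X, AdjoinRoot.mk_C] at h0
    rw [Algebra.smul_def, Algebra.smul_def, mul_one, AdjoinRoot.algebraMap_eq]
    rw [← hα] at h0
    simp only [map_add, map_mul]
    linear_combination h0
  have key2 : α ^ 2 = (-(x₁ * x₂)) • (1 : E) + (x₁ + x₂) • α := by rw [key]; module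
  have key3 : α ^ 3 = (-((x₁ + x₂) * (x₁ * x₂))) • (1 : E)
      + ((x₁ + x₂) * (x₁ + x₂) - x₁ * x₂) • α := by
    have h3 : α ^ 3 = α * α ^ 2 := by ring
    rw [h3, key, mul_sub, mul_smul_comm, mul_smul_comm, ← pow_two, key, mul_one]
    module
  -- representation lemma
  have hr : ∀ (c0 c1 : R) (i : Fin 2), b.repr (c0 • b 0 + c1 • b 1) i = ![c0, c1] i := by
    intro c0 c1 i
    rw [map_add, map_smul, map_smul, b.repr_self, b.repr_self]
    fin_cases i <;> simp
  have htr : ∀ x : E, Algebra.trace R E x = b.repr (x * b 0) 0 + b.repr (x * b 1) 1 := by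
    intro x
    rw [Algebra.trace_eq_matrix_trace b, Matrix.trace_fin_two,
      Algebra.leftMulMatrix_eq_repr_mul, Algebra.leftMulMatrix_eq_repr_mul]
  have tr1 : Algebra.trace R E 1 = 2 := by
    rw [htr, one_mul, one_mul, b.repr_self, b.repr_self]
    simp [one_add_one_eq_two]
  have rα0 : b.repr (α * b 0) 0 = 0 := by
    rw [hb0, mul_one, ← hb1, b.repr_self]
    simp
  have rα1 : b.repr (α * b 1) 1 = x₁ + x₂ := by
    rw [hb1, ← pow_two, key2, ← hb0, ← hb1, hr]
    simp
  have trα : Algebra.trace R E α = x₁ + x₂ := by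
    rw [htr, rα0, rα1, zero_add]
  have trα2 : Algebra.trace R E (α ^ 2) = x₁ ^ 2 + x₂ ^ 2 := by
    rw [htr,
      show b.repr (α ^ 2 * b 0) 0 = -(x₁ * x₂) by
        rw [hb0, mul_one, key2, ← hb0, ← hb1, hr]; simp,
      show b.repr (α ^ 2 * b 1) 1 = (x₁ + x₂) * (x₁ + x₂) - x₁ * x₂ by
        rw [hb1, ← pow_succ, key3, ← hb0, ← hb1, hr]; simp]
    ring
  refine ⟨b, hb0, hb1, trα, trα2, ?_⟩
  rw [Algebra.discr_def, Matrix.det_fin_two]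
  simp only [Algebra.traceMatrix_apply, Algebra.traceForm_apply, Matrix.cons_val_zero,
    Matrix.cons_val_one, Matrix.head_cons, one_mul, mul_one, ← hα]
  rw [show α * α = α ^ 2 from (sq α).symm, tr1, trα, trα2]
  ring
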